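/- Let t ≥ 3 and let F_{P,t} be the 3-graph on A ∪ [t], A = {a₁,…,a_{t−1}}, with edges {aᵢ, i, j} for 1 ≤ i < j ≤ t. Let H_B be the 3-graph on U ∪ V with |U| = s, |V| = n−s, whose edges are all triples {u,v,w} with u ∈ U and vw an edge of a fixed Turán graph T(n−s, t−1) on V. Then H_B is F_{P,t}-free, has matching number at most s, and has exactly s·t(n−s,t−1) edges. -/
import Mathlib


open Finset

/-- Degree of a vertex in a 3-graph. -/
def degH {n : ℕ} (H : Finset (Finset (Fin n))) (v : Fin n) : ℕ :=
  (H.filter (fun e => v ∈ e)).card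

/-- `H` is a 3-uniform hypergraph. -/
def Uniform3 {n : ℕ} (H : Finset (Finset (Fin n))) : Prop :=
  ∀ e ∈ H, e.card = 3

/-- The matching number of `H` is at most `s`. -/
def MatchingAtMost {n : ℕ} (H : Finset (Finset (Fin n))) (s : ℕ) : Prop :=
  ∀ M ⊆ H, (M : Set (Finset (Fin n))).Pairwise (fun e f => Disjoint e f) → M.card ≤ s

/-- `H` contains a copy of the hypergraph with edge set `F`. -/
def HasCopy {α : Type*} [DecidableEq α] {n : ℕ}
    (F : Set (Finset α)) (H : Finset (Finset (Fin n))) : Prop :=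
  ∃ f : α → Fin n, Function.Injective f ∧ ∀ e ∈ F, e.image f ∈ H

/-- Number of edges of the Turán graph `T(n, r)`. -/
def turanEdges (n r : ℕ) : ℕ := (SimpleGraph.turanGraph n r).edgeFinset.card

/-- Edge set of the 3-graph `F_{P,t}` on `A ∪ [t]`, `A = Fin (t-1)`:
edges are `{aᵢ, i, j}` for `1 ≤ i < j ≤ t`. -/
def FPtEdges (t : ℕ) : Set (Finset (Fin (t - 1) ⊕ Fin t)) :=
  { e | ∃ (i : Fin (t - 1)) (j : Fin t), (i : ℕ) < (j : ℕ) ∧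
      e = {Sum.inl i, Sum.inr (Fin.castLE (Nat.sub_le t 1) i), Sum.inr j} }

/-- The 3-graph `H_B`: vertices `< s` form `U`; on the remaining `n - s`
vertices place a Turán graph `T(n-s, t-1)` (color classes given by residues
mod `t-1`), and take all triples consisting of a vertex of `U` and an edge of
this Turán graph. -/
def HB (n s t : ℕ) : Finset (Finset (Fin n)) :=
  Finset.univ.filter (fun e => ∃ u v w : Fin n, e = {u, v, w} ∧ (u : ℕ) < s ∧
    s ≤ (v : ℕ) ∧ s ≤ (w : ℕ) ∧ v ≠ w ∧
    ((v : ℕ) - s) % (t - 1) ≠ ((w : ℕ) - s) % (t - 1))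

lemma HB_mem_cases {n s t : ℕ} {e : Finset (Fin n)} (he : e ∈ HB n s t) :
    ∃ u v w : Fin n, e = {u, v, w} ∧ (u : ℕ) < s ∧ s ≤ (v : ℕ) ∧ s ≤ (w : ℕ) ∧ v ≠ w ∧
      ((v : ℕ) - s) % (t - 1) ≠ ((w : ℕ) - s) % (t - 1) := by
  simpa [HB] using he

lemma HB_exists_small {n s t : ℕ} {e : Finset (Fin n)} (he : e ∈ HB n s t) :
    ∃ a ∈ e, (a : ℕ) < s := by
  obtain ⟨u, v, w, rfl, hu, -⟩ := HB_mem_cases he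
  exact ⟨u, by simp, hu⟩

lemma HB_unique_small {n s t : ℕ} {e : Finset (Fin n)} (he : e ∈ HB n s t) {a b : Fin n}
    (ha : a ∈ e) (hb : b ∈ e) (hab : a ≠ b) (has : (a : ℕ) < s) (hbs : (b : ℕ) < s) : False := by
  obtain ⟨u, v, w, rfl, hu, hv, hw, hvw, hc⟩ := HB_mem_cases he
  simp only [Finset.mem_insert, Finset.mem_singleton] at ha hb
  rcases ha with rfl | rfl | rfl <;> rcases hb with rfl | rfl | rfl <;>
    first | exact absurd rfl hab | omega

lemma HB_color {n s t : ℕ} {e : Finset (Fin n)} (he : e ∈ HB n s t) {a b : Fin n}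
    (ha : a ∈ e) (hb : b ∈ e) (hab : a ≠ b) (has : s ≤ (a : ℕ)) (hbs : s ≤ (b : ℕ)) :
    ((a : ℕ) - s) % (t - 1) ≠ ((b : ℕ) - s) % (t - 1) := by
  obtain ⟨u, v, w, rfl, hu, hv, hw, hvw, hc⟩ := HB_mem_cases he
  simp only [Finset.mem_insert, Finset.mem_singleton] at ha hb
  rcases ha with rfl | rfl | rfl <;> rcases hb with rfl | rfl | rfl <;>
    first | exact absurd rfl hab | omega | exact hc | exact fun h => hc h.symm

theorem stmt_7 {n s t : ℕ} (ht : 3 ≤ t) (hsn : s ≤ n) :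
    ¬ HasCopy (FPtEdges t) (HB n s t) ∧ MatchingAtMost (HB n s t) s ∧
    (HB n s t).card = s * turanEdges (n - s) (t - 1) := by
  refine ⟨?_, ?_, ?_⟩
  · rintro ⟨f, hf, hcopy⟩
    classical
    set x : Fin t → Fin n := fun j => f (Sum.inr j) with hx
    set y : Fin (t - 1) → Fin n := fun i => f (Sum.inl i) with hy
    have hedge : ∀ (i : Fin (t - 1)) (j : Fin t), (i : ℕ) < (j : ℕ) →
        ({y i, x (Fin.castLE (Nat.sub_le t 1) i), x j} : Finset (Fin n)) ∈ HB n s t := by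
      intro i j hij
      have h := hcopy _ ⟨i, j, hij, rfl⟩
      simpa [hx, hy, Finset.image_insert] using h
    have hxinj : Function.Injective x := fun a b h => by
      have := hf h; simpa using this
    have hyx : ∀ i j, y i ≠ x j := fun i j h => by simpa [hx, hy] using hf h
    have hedge2 : ∀ (j : Fin t) (hjt : (j : ℕ) < t - 1) (k : Fin t), (j : ℕ) < (k : ℕ) →
        ({y ⟨(j : ℕ), hjt⟩, x j, x k} : Finset (Fin n)) ∈ HB n s t := by
      intro j hjt k hjk
      have hc : Fin.castLE (Nat.sub_le t 1) (⟨(j : ℕ), hjt⟩ : Fin (t - 1)) = j :=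
        Fin.ext rfl
      have h := hedge ⟨(j : ℕ), hjt⟩ k hjk
      rwa [hc] at h
    have hone : ∀ j k : Fin t, (j : ℕ) < (k : ℕ) → (x j : ℕ) < s → (x k : ℕ) < s → False := by
      intro j k hjk hj hk
      have hkt := k.isLt
      have hjt : (j : ℕ) < t - 1 := by omega
      have hne : x j ≠ x k := fun h => by cases hxinj h; omega
      exact HB_unique_small (hedge2 j hjt k hjk) (by simp) (by simp) hne hj hk
    have hcol : ∀ j k : Fin t, (j : ℕ) < (k : ℕ) → s ≤ (x j : ℕ) → s ≤ (x k : ℕ) →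
        ((x j : ℕ) - s) % (t - 1) ≠ ((x k : ℕ) - s) % (t - 1) := by
      intro j k hjk hj hk
      have hkt := k.isLt
      have hjt : (j : ℕ) < t - 1 := by omega
      have hne : x j ≠ x k := fun h => by cases hxinj h; omega
      exact HB_color (hedge2 j hjt k hjk) (by simp) (by simp) hne hj hk
    set S : Finset (Fin t) := Finset.univ.filter (fun j => (x j : ℕ) < s) with hS
    set B : Finset (Fin t) := Finset.univ.filter (fun j => ¬ (x j : ℕ) < s) with hB
    have hSB : S.card + B.card = t := by
      have h := Finset.card_filter_add_card_filter_not
        (s := (Finset.univ : Finset (Fin t))) (p := fun j => (x j : ℕ) < s)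
      simpa [hS, hB] using h
    have hScard : S.card ≤ 1 := by
      rw [Finset.card_le_one]
      intro a ha b hb
      simp only [hS, Finset.mem_filter] at ha hb
      rcases lt_trichotomy (a : ℕ) (b : ℕ) with h | h | h
      · exact (hone a b h ha.2 hb.2).elim
      · exact Fin.ext h
      · exact (hone b a h hb.2 ha.2).elim
    have hBim : (B.image (fun j => ((x j : ℕ) - s) % (t - 1))).card = B.card :=
      Finset.card_image_of_injOn (by
        intro a ha b hb hcoleq
        simp only [hB, Finset.mem_coe, Finset.mem_filter, not_lt] at ha hb
        rcases lt_trichotomy (a : ℕ) (b : ℕ) with h | h | h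
        · exact ((hcol a b h (by omega) (by omega)) hcoleq).elim
        · exact Fin.ext h
        · exact ((hcol b a h (by omega) (by omega)) hcoleq.symm).elim)
    have hBsub : (B.image (fun j => ((x j : ℕ) - s) % (t - 1))) ⊆ Finset.range (t - 1) := by
      intro c hc
      obtain ⟨j, hj, rfl⟩ := Finset.mem_image.1 hc
      exact Finset.mem_range.2 (Nat.mod_lt _ (by omega))
    have hBcard : B.card ≤ t - 1 := by
      calc B.card = _ := hBim.symm
        _ ≤ (Finset.range (t - 1)).card := Finset.card_le_card hBsub
        _ = t - 1 := Finset.card_range _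
    have hS1 : S.card = 1 := by omega
    obtain ⟨m, hm⟩ := Finset.card_eq_one.1 hS1
    have hmS : (x m : ℕ) < s := by
      have : m ∈ S := hm ▸ Finset.mem_singleton_self m
      simpa [hS] using this
    have hnot : ∀ j : Fin t, j ≠ m → s ≤ (x j : ℕ) := by
      intro j hj
      by_contra h
      have hjS : j ∈ S := by
        simp only [hS, Finset.mem_filter]
        exact ⟨Finset.mem_univ _, by omega⟩
      rw [hm, Finset.mem_singleton] at hjS
      exact hj hjS
    rcases Nat.eq_zero_or_pos (m : ℕ) with hm0 | hm0
    · -- m has value 0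
      have hmt : (m : ℕ) < t - 1 := by omega
      have h1t : (1 : ℕ) < t := by omega
      have hj1v : ((⟨1, h1t⟩ : Fin t) : ℕ) = 1 := rfl
      have he1 := hedge2 m hmt ⟨1, h1t⟩ (by omega)
      have hy0 : s ≤ (y ⟨(m : ℕ), hmt⟩ : ℕ) := by
        by_contra h
        exact HB_unique_small he1 (a := y ⟨(m : ℕ), hmt⟩) (b := x m) (by simp) (by simp)
          (hyx _ m) (by omega) hmS
      have himeq : B.image (fun j => ((x j : ℕ) - s) % (t - 1)) = Finset.range (t - 1) := by
        apply Finset.eq_of_subset_of_card_le hBsub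
        rw [Finset.card_range, hBim]
        omega
      have hcy : ((y ⟨(m : ℕ), hmt⟩ : ℕ) - s) % (t - 1) ∈ Finset.range (t - 1) :=
        Finset.mem_range.2 (Nat.mod_lt _ (by omega))
      rw [← himeq] at hcy
      obtain ⟨k, hkB, hkeq⟩ := Finset.mem_image.1 hcy
      have hks : s ≤ (x k : ℕ) := by
        simp only [hB, Finset.mem_filter] at hkB
        omega
      have hkm : (m : ℕ) < (k : ℕ) := by
        have hne : k ≠ m := fun h => by rw [h] at hks; omega
        have : (k : ℕ) ≠ (m : ℕ) := fun h => hne (Fin.ext h)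
        omega
      have he2 := hedge2 m hmt k hkm
      exact (HB_color he2 (a := y ⟨(m : ℕ), hmt⟩) (b := x k) (by simp) (by simp) (hyx _ k) hy0 hks) hkeq.symm
    · -- m has positive value
      have h0t : (0 : ℕ) < t := by omega
      have h0t1 : ((⟨0, h0t⟩ : Fin t) : ℕ) < t - 1 := by
        show (0 : ℕ) < t - 1; omega
      have hzv : ((⟨0, h0t⟩ : Fin t) : ℕ) = 0 := rfl
      have hzm : (⟨0, h0t⟩ : Fin t) ≠ m := fun h => by
        have := congrArg Fin.val h; rw [hzv] at this; omega
      have hzs : s ≤ (x ⟨0, h0t⟩ : ℕ) := hnot _ hzm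
      have he1 := hedge2 ⟨0, h0t⟩ h0t1 m (by omega)
      have hy0 : s ≤ (y ⟨((⟨0, h0t⟩ : Fin t) : ℕ), h0t1⟩ : ℕ) := by
        by_contra h
        exact HB_unique_small he1 (a := y ⟨((⟨0, h0t⟩ : Fin t) : ℕ), h0t1⟩) (b := x m)
          (by simp) (by simp) (hyx _ m) (by omega) hmS
      have h2t : (2 : ℕ) < t := by omega
      have hkex : ∃ k : Fin t, 0 < (k : ℕ) ∧ (k : ℕ) ≠ (m : ℕ) := by
        by_cases h1 : (m : ℕ) = 1
        · exact ⟨⟨2, h2t⟩, by simp, by simp [h1]⟩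
        · exact ⟨⟨1, by omega⟩, by simp, by simpa using h1 ∘ Eq.symm⟩
      obtain ⟨k, hk0, hkm⟩ := hkex
      have he2 := hedge2 ⟨0, h0t⟩ h0t1 k (by omega)
      have hyeq : y ⟨((⟨0, h0t⟩ : Fin t) : ℕ), h0t1⟩ = y ⟨0, h0t1⟩ := rfl
      rw [hyeq] at hy0
      obtain ⟨a, hamem, hasmall⟩ := HB_exists_small he2
      simp only [Finset.mem_insert, Finset.mem_singleton] at hamem
      have hknm : k ≠ m := fun h => hkm (congrArg Fin.val h)
      have hksb : s ≤ (x k : ℕ) := hnot k hknm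
      rcases hamem with rfl | rfl | rfl
      · omega
      · omega
      · omega
  · intro M hM hpair
    classical
    set g : Finset (Fin n) → ℕ := fun e =>
      if h : ∃ a ∈ e, (a : ℕ) < s then (h.choose : Fin n).val else 0 with hg
    have hgspec : ∀ e ∈ M, ∃ a : Fin n, a ∈ e ∧ (a : ℕ) < s ∧ (a : ℕ) = g e := by
      intro e he
      have h := HB_exists_small (hM he)
      refine ⟨h.choose, h.choose_spec.1, h.choose_spec.2, ?_⟩
      simp only [hg]
      rw [dif_pos h]
    calc M.card ≤ (Finset.range s).card := ?_
      _ = s := Finset.card_range s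
    apply Finset.card_le_card_of_injOn g
    · intro e he
      obtain ⟨a, -, has, hval⟩ := hgspec e he
      exact Finset.mem_range.2 (hval ▸ has)
    · intro e he f hf heq
      obtain ⟨a, ha, -, hva⟩ := hgspec e he
      obtain ⟨b, hb, -, hvb⟩ := hgspec f hf
      have hab : a = b := Fin.ext (by omega)
      by_contra hne
      exact Finset.disjoint_left.1 (hpair he hf hne) ha (hab ▸ hb)
  · show (HB n s t).card = s * turanEdges (n - s) (t - 1)
    rw [turanEdges]
    rcases Nat.eq_zero_or_pos s with rfl | hs
    · have hE : HB n 0 t = ∅ := by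
        rw [Finset.eq_empty_iff_forall_notMem]
        intro e he
        obtain ⟨u, v, w, -, hu, -⟩ := HB_mem_cases he
        omega
      simp [hE]
    · have hn : 0 < n := lt_of_lt_of_le hs hsn
      classical
      set G := SimpleGraph.turanGraph (n - s) (t - 1) with hG
      set A := (Finset.range s) ×ˢ G.edgeFinset with hA
      set uF : ℕ → Fin n := fun u => ⟨u % n, Nat.mod_lt _ hn⟩ with huF
      set pairF : Sym2 (Fin (n - s)) → Finset (Fin n) :=
        Sym2.lift ⟨fun a b => {(⟨(a : ℕ) + s, by have := a.isLt; omega⟩ : Fin n),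
          ⟨(b : ℕ) + s, by have := b.isLt; omega⟩}, fun a b => Finset.pair_comm _ _⟩ with hpairF
      set F : ℕ × Sym2 (Fin (n - s)) → Finset (Fin n) := fun p => insert (uF p.1) (pairF p.2)
        with hF
      have hadj : ∀ a b : Fin (n - s), G.Adj a b ↔ (a : ℕ) % (t - 1) ≠ (b : ℕ) % (t - 1) := by
        intro a b; simp [hG, SimpleGraph.turanGraph]
      have himg : HB n s t = A.image F := by
        ext e
        constructor
        · intro he
          obtain ⟨u, v, w, rfl, hu, hv, hw, hvw, hc⟩ := HB_mem_cases he
          have hvlt := v.isLt; have hwlt := w.isLt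
          refine Finset.mem_image.2 ⟨((u : ℕ),
            s((⟨(v : ℕ) - s, by omega⟩ : Fin (n - s)), ⟨(w : ℕ) - s, by omega⟩)), ?_, ?_⟩
          · refine Finset.mem_product.2 ⟨Finset.mem_range.2 hu, ?_⟩
            rw [SimpleGraph.mem_edgeFinset, SimpleGraph.mem_edgeSet, hadj]
            simpa using hc
          · show insert (uF (u : ℕ)) (pairF _) = {u, v, w}
            have h1 : uF (u : ℕ) = u := Fin.ext (Nat.mod_eq_of_lt (by omega))
            have h2 : pairF s((⟨(v : ℕ) - s, by omega⟩ : Fin (n - s)), ⟨(w : ℕ) - s, by omega⟩)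
                = {v, w} := by
              simp only [hpairF, Sym2.lift_mk]
              congr 1
              · exact Fin.ext (by simp; omega)
              · exact congrArg _ (Fin.ext (by simp; omega))
            rw [h1, h2]
        · intro he
          obtain ⟨⟨u, p⟩, hmem, rfl⟩ := Finset.mem_image.1 he
          obtain ⟨hu, hp⟩ := Finset.mem_product.1 hmem
          rw [Finset.mem_range] at hu
          induction p using Sym2.ind with
          | _ a b =>
            have hab : (a : ℕ) % (t - 1) ≠ (b : ℕ) % (t - 1) :=
              (hadj a b).1 (by rwa [SimpleGraph.mem_edgeFinset, SimpleGraph.mem_edgeSet] at hp)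
            have ha := a.isLt; have hb := b.isLt
            simp only [HB, Finset.mem_filter]
            refine ⟨Finset.mem_univ _, uF u, ⟨(a : ℕ) + s, by omega⟩, ⟨(b : ℕ) + s, by omega⟩,
              ?_, ?_, ?_, ?_, ?_, ?_⟩
            · show insert (uF u) (pairF _) = _
              simp only [hpairF, Sym2.lift_mk]
            · show u % n < s
              have hun : u % n = u := Nat.mod_eq_of_lt (by omega)
              omega
            · show s ≤ ((⟨(a : ℕ) + s, by omega⟩ : Fin n) : ℕ)
              simp only [Fin.val_mk]; omega
            · show s ≤ ((⟨(b : ℕ) + s, by omega⟩ : Fin n) : ℕ)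
              simp only [Fin.val_mk]; omega
            · intro h
              have h2 := congrArg Fin.val h
              simp only [Fin.val_mk] at h2
              have hab2 : a = b := Fin.ext (by omega)
              exact hab (by rw [hab2])
            · simp only [Fin.val_mk]
              have e1 : (a : ℕ) + s - s = a := by omega
              have e2 : (b : ℕ) + s - s = b := by omega
              rw [e1, e2]; exact hab
      have hinj : Set.InjOn F A := by
        rintro ⟨u, p⟩ hup ⟨u', p'⟩ hup' heq
        simp only [Finset.mem_coe, hA, Finset.mem_product, Finset.mem_range] at hup hup'
        induction p using Sym2.ind with
        | _ a b =>
          induction p' using Sym2.ind with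
          | _ c d =>
            have hab : a ≠ b := fun h => by
              have := (hadj a b).1 ((SimpleGraph.mem_edgeSet _).1
                ((SimpleGraph.mem_edgeFinset).1 hup.2))
              exact this (by rw [h])
            have hcd : c ≠ d := fun h => by
              have := (hadj c d).1 ((SimpleGraph.mem_edgeSet _).1
                ((SimpleGraph.mem_edgeFinset).1 hup'.2))
              exact this (by rw [h])
            simp only [hF, hpairF, Sym2.lift_mk] at heq
            have hun : u % n = u := Nat.mod_eq_of_lt (by omega)
            have hun' : u' % n = u' := Nat.mod_eq_of_lt (by omega)
            have husmall : (uF u : ℕ) < s := by simp only [huF, Fin.val_mk]; omega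
            have hu'small : (uF u' : ℕ) < s := by simp only [huF, Fin.val_mk]; omega
            -- memberships
            have h1 : uF u ∈ ({uF u', (⟨(c:ℕ)+s, by have := c.isLt; omega⟩ : Fin n),
                ⟨(d:ℕ)+s, by have := d.isLt; omega⟩} : Finset (Fin n)) := by
              rw [← heq]; simp
            have h2 : (⟨(a:ℕ)+s, by have := a.isLt; omega⟩ : Fin n) ∈
                ({uF u', (⟨(c:ℕ)+s, by have := c.isLt; omega⟩ : Fin n),
                ⟨(d:ℕ)+s, by have := d.isLt; omega⟩} : Finset (Fin n)) := by
              rw [← heq]; simp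
            have h3 : (⟨(b:ℕ)+s, by have := b.isLt; omega⟩ : Fin n) ∈
                ({uF u', (⟨(c:ℕ)+s, by have := c.isLt; omega⟩ : Fin n),
                ⟨(d:ℕ)+s, by have := d.isLt; omega⟩} : Finset (Fin n)) := by
              rw [← heq]; simp
            simp only [Finset.mem_insert, Finset.mem_singleton] at h1 h2 h3
            have huu : u = u' := by
              rcases h1 with h | h | h
              · have := congrArg Fin.val h
                simp only [huF, Fin.val_mk] at this
                omega
              · have := congrArg Fin.val h; simp only [huF, Fin.val_mk] at this; omega
              · have := congrArg Fin.val h; simp only [huF, Fin.val_mk] at this; omega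
            have ha' : a = c ∨ a = d := by
              rcases h2 with h | h | h
              · have := congrArg Fin.val h; simp only [huF, Fin.val_mk] at this; omega
              · exact Or.inl (Fin.ext (by have := congrArg Fin.val h; simp only [Fin.val_mk] at this; omega))
              · exact Or.inr (Fin.ext (by have := congrArg Fin.val h; simp only [Fin.val_mk] at this; omega))
            have hb' : b = c ∨ b = d := by
              rcases h3 with h | h | h
              · have := congrArg Fin.val h; simp only [huF, Fin.val_mk] at this; omega
              · exact Or.inl (Fin.ext (by have := congrArg Fin.val h; simp only [Fin.val_mk] at this; omega))
              · exact Or.inr (Fin.ext (by have := congrArg Fin.val h; simp only [Fin.val_mk] at this; omega))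
            have hpp : s(a, b) = s(c, d) := by
              rw [Sym2.eq_iff]
              rcases ha' with rfl | rfl
              · rcases hb' with rfl | rfl
                · exact absurd rfl hab
                · exact Or.inl ⟨rfl, rfl⟩
              · rcases hb' with rfl | rfl
                · exact Or.inr ⟨rfl, rfl⟩
                · exact absurd rfl hab
            rw [huu, hpp]
      rw [himg, Finset.card_image_of_injOn hinj, hA, Finset.card_product, Finset.card_range]
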